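/- If M is a maximal matching in a graph G and q ≥ 1, then any edge q-colouring of G uses at most 2q·|M| distinct colours. -/

import Mathlib

open Finset

variable {V : Type*}

/-- The set of colours appearing on edges incident to vertex `v`. -/
def vColors (G : SimpleGraph V) (f : V → V → ℕ) (v : V) : Set ℕ :=
  {c | ∃ u, G.Adj v u ∧ f v u = c}

/-- The set of colours used on edges of `G`. -/
def colorsOf (G : SimpleGraph V) (f : V → V → ℕ) : Set ℕ :=
  {c | ∃ u v, G.Adj u v ∧ f u v = c}

/-- An edge `q`-colouring: a symmetric assignment of colours to edges such that
every vertex is incident with at most `q` distinct colours. -/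
def IsEdgeQColoring (G : SimpleGraph V) (q : ℕ) (f : V → V → ℕ) : Prop :=
  (∀ u v, f u v = f v u) ∧ ∀ v, (vColors G f v).ncard ≤ q

/-- `S`-composability: every vertex of `S` sees at most `q - 1` non-zero colours. -/
def IsComposable (G : SimpleGraph V) (q : ℕ) (S : Set V) (f : V → V → ℕ) : Prop :=
  ∀ v ∈ S, ((vColors G f v) \ {0}).ncard ≤ q - 1

/-- `χ'_q(G, S)`: maximum number of non-zero colours of an `S`-composable edge
`q`-colouring of `G`. -/
noncomputable def chiq (G : SimpleGraph V) (q : ℕ) (S : Set V) : ℕ :=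
  sSup {k | ∃ f, IsEdgeQColoring G q f ∧ IsComposable G q S f ∧
    ((colorsOf G f) \ {0}).ncard = k}

/-- `χ'_q(G)`: maximum number of distinct colours of an edge `q`-colouring of `G`. -/
noncomputable def chimax (G : SimpleGraph V) (q : ℕ) : ℕ :=
  sSup {k | ∃ f, IsEdgeQColoring G q f ∧ (colorsOf G f).ncard = k}

/-- `M` is a matching in `G`: a set of edges, pairwise not sharing a vertex. -/
def IsMatchingSet (G : SimpleGraph V) (M : Set (Sym2 V)) : Prop :=
  M ⊆ G.edgeSet ∧ ∀ e ∈ M, ∀ e' ∈ M, e ≠ e' → ∀ v, v ∈ e → v ∉ e'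

/-- `M` is a maximal matching in `G`. -/
def IsMaximalMatchingSet (G : SimpleGraph V) (M : Set (Sym2 V)) : Prop :=
  IsMatchingSet G M ∧ ∀ e ∈ G.edgeSet, ∃ e' ∈ M, ∃ v, v ∈ e ∧ v ∈ e'

/-- `X` is a vertex cover of `G`. -/
def IsVertexCover (G : SimpleGraph V) (X : Set V) : Prop :=
  ∀ e ∈ G.edgeSet, ∃ v ∈ X, v ∈ e

/-- A layering of `G`. -/
def IsLayering (G : SimpleGraph V) (lam : V → ℤ) : Prop :=
  ∀ u v, G.Adj u v → |lam u - lam v| ≤ 1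

/-- The graph part `G_m` of the `(λ, r, m)`-stratification: delete all edges `uv`
with `λ(u) ≡ m` and `λ(v) ≡ m + 1 (mod r)`. -/
def stratGraph (G : SimpleGraph V) (lam : V → ℤ) (r m : ℤ) : SimpleGraph V where
  Adj u v := G.Adj u v ∧
    ¬ ((lam u ≡ m [ZMOD r] ∧ lam v ≡ m + 1 [ZMOD r]) ∨
       (lam v ≡ m [ZMOD r] ∧ lam u ≡ m + 1 [ZMOD r]))
  symm := by
    refine ⟨fun u v h => ?_⟩
    exact ⟨h.1.symm, fun hc => h.2 hc.symm⟩
  loopless := ⟨fun v h => G.loopless.irrefl v h.1⟩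

/-- The set `S_m` of the `(λ, r, m)`-stratification: vertices incident with deleted
edges. -/
def stratSet (G : SimpleGraph V) (lam : V → ℤ) (r m : ℤ) : Set V :=
  {v | ∃ u, G.Adj v u ∧ ¬ (stratGraph G lam r m).Adj v u}

/-- any edge `q`-colouring uses at most `2q|M|` colours, for `M` a
maximal matching. -/
theorem stmt2 [Fintype V] (G : SimpleGraph V) (M : Set (Sym2 V))
    (hM : IsMaximalMatchingSet G M) (q : ℕ) (hq : 1 ≤ q)
    (f : V → V → ℕ) (hf : IsEdgeQColoring G q f) :
    (colorsOf G f).ncard ≤ 2 * q * M.ncard := by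
  classical
  obtain ⟨⟨hMsub, _⟩, hmax⟩ := hM
  have hMfin : M.Finite := Set.toFinite M
  set Mfin := hMfin.toFinset with hMdef
  set X : Finset V := Mfin.biUnion (fun e => Finset.univ.filter (· ∈ e)) with hX
  set Fv : V → Finset ℕ := fun v => (Finset.univ.filter (G.Adj v)).image (f v) with hFv
  have hvc : ∀ v, vColors G f v = ↑(Fv v) := by
    intro v
    ext c
    simp [vColors, hFv, and_comm]
  have hFvq : ∀ v, (Fv v).card ≤ q := by
    intro v
    have := hf.2 v
    rwa [hvc v, Set.ncard_coe_finset] at this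
  have hsub : colorsOf G f ⊆ ↑(X.biUnion Fv) := by
    rintro c ⟨u, v, huv, rfl⟩
    obtain ⟨e', he'M, w, hw1, hw2⟩ := hmax _ (G.mem_edgeSet.2 huv)
    have hwX : w ∈ X := by
      simp only [hX, Finset.mem_biUnion]
      exact ⟨e', hMfin.mem_toFinset.2 he'M, by simp [hw2]⟩
    rw [Sym2.mem_iff] at hw1
    simp only [Finset.coe_biUnion, Set.mem_iUnion]
    rcases hw1 with rfl | rfl
    · exact ⟨w, hwX, by simp [hFv]; exact ⟨v, huv, rfl⟩⟩
    · exact ⟨w, hwX, by simp [hFv]; exact ⟨u, huv.symm, (hf.1 u w).symm⟩⟩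
  have hX2 : X.card ≤ 2 * Mfin.card := by
    have h1 : X.card ≤ ∑ e ∈ Mfin, (Finset.univ.filter (· ∈ e)).card :=
      Finset.card_biUnion_le
    have h2 : ∀ e ∈ Mfin, (Finset.univ.filter (· ∈ e)).card ≤ 2 := by
      rintro e -
      induction e using Sym2.ind with
      | _ a b =>
        refine le_trans (Finset.card_le_card (fun x hx => ?_))
          ((Finset.card_insert_le a {b}).trans (by simp))
        simp only [Finset.mem_filter, Sym2.mem_iff] at hx
        rcases hx.2 with rfl | rfl <;> simp
    calc X.card ≤ ∑ e ∈ Mfin, (Finset.univ.filter (· ∈ e)).card := h1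
      _ ≤ ∑ _e ∈ Mfin, 2 := Finset.sum_le_sum h2
      _ = 2 * Mfin.card := by rw [Finset.sum_const, smul_eq_mul, mul_comm]
  have hMcard : M.ncard = Mfin.card := Set.ncard_eq_toFinset_card M hMfin
  calc (colorsOf G f).ncard ≤ (↑(X.biUnion Fv) : Set ℕ).ncard :=
        Set.ncard_le_ncard hsub (Finset.finite_toSet _)
    _ = (X.biUnion Fv).card := Set.ncard_coe_finset _
    _ ≤ ∑ v ∈ X, (Fv v).card := Finset.card_biUnion_le
    _ ≤ ∑ _v ∈ X, q := Finset.sum_le_sum (fun v _ => hFvq v)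
    _ = X.card * q := by rw [Finset.sum_const, smul_eq_mul]
    _ ≤ (2 * Mfin.card) * q := by gcongr
    _ = 2 * q * M.ncard := by rw [hMcard]; ring
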